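/- For every integer N ≥ 2 and every σ > 0, the function p_{N,σ} integrates to 1 over ℝ^N, i.e. ∫_{ℝ^N} p_{N,σ}(x) dx = 1; in other words, p_{N,σ} is a probability density on ℝ^N. -/

import Mathlib

open MeasureTheory Real Finset Filter

private lemma sum_pairs_sq (N : ℕ) (x : Fin N → ℝ) :
    ∑ k : Fin N, ∑ l ∈ Finset.univ.filter (fun l => k < l), (x k - x l) ^ 2
      = (N : ℝ) * ∑ n, (x n) ^ 2 - (∑ n, x n) ^ 2 := by
  have h1 : ∑ k : Fin N, ∑ l : Fin N, (x k - x l) ^ 2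
      = 2 * ((N : ℝ) * ∑ n, (x n) ^ 2 - (∑ n, x n) ^ 2) := by
    have : ∀ k l : Fin N, (x k - x l) ^ 2 = (x k)^2 - 2 * (x k * x l) + (x l)^2 := by
      intro k l; ring
    simp_rw [this, Finset.sum_add_distrib, Finset.sum_sub_distrib, Finset.sum_const,
      ← Finset.mul_sum, Finset.card_univ, Fintype.card_fin, nsmul_eq_mul, ← Finset.sum_mul]
    rw [← Finset.mul_sum]
    ring
  have h2 : ∀ k : Fin N, (Finset.univ.filter (fun l => ¬ k < l))
      = insert k (Finset.univ.filter (fun l => l < k)) := by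
    intro k; ext l
    simp [not_lt, le_iff_lt_or_eq, or_comm, eq_comm]
  have h3 : ∑ k : Fin N, ∑ l : Fin N, (x k - x l) ^ 2
      = (∑ k : Fin N, ∑ l ∈ Finset.univ.filter (fun l => k < l), (x k - x l) ^ 2)
        + ∑ k : Fin N, ∑ l ∈ Finset.univ.filter (fun l => l < k), (x k - x l) ^ 2 := by
    rw [← Finset.sum_add_distrib]
    refine Finset.sum_congr rfl fun k _ => ?_
    rw [← Finset.sum_filter_add_sum_filter_not Finset.univ (fun l => k < l), h2 k,
      Finset.sum_insert (by simp)]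
    simp
  have h4 : ∑ k : Fin N, ∑ l ∈ Finset.univ.filter (fun l => l < k), (x k - x l) ^ 2
      = ∑ k : Fin N, ∑ l ∈ Finset.univ.filter (fun l => k < l), (x k - x l) ^ 2 := by
    rw [Finset.sum_comm' (t' := Finset.univ) (s' := fun l => Finset.univ.filter (fun k => l < k))
      (by intro k l; simp)]
    refine Finset.sum_congr rfl fun l _ => Finset.sum_congr rfl fun k _ => ?_
    ring
  linarith

/-- The `N`-variate normal density
`p_{N,σ}(x) = σ⁻¹ (2π)^{-N/2} ∏_{k<l} exp(-(1/(2N))(1-σ⁻²)(x_k-x_l)²) ∏_n exp(-x_n²/(2σ²))`. -/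
noncomputable def pdensity (N : ℕ) (σ : ℝ) (x : Fin N → ℝ) : ℝ :=
  σ⁻¹ * (2 * π) ^ (-(N : ℝ) / 2) *
    (∏ k : Fin N, ∏ l ∈ Finset.univ.filter (fun l => k < l),
      Real.exp (-(1 / (2 * (N : ℝ))) * (1 - (σ ^ 2)⁻¹) * (x k - x l) ^ 2)) *
    ∏ n : Fin N, Real.exp (-(x n) ^ 2 / (2 * σ ^ 2))

private lemma pdensity_eq (N : ℕ) (hN : 0 < N) (σ : ℝ) (hσ : 0 < σ) (x : Fin N → ℝ) :
    pdensity N σ x = σ⁻¹ * (2 * π) ^ (-(N : ℝ) / 2) *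
      ∏ n : Fin N, Real.exp (-(1/2) * (x n + (σ⁻¹ - 1) / N * ∑ m, x m) ^ 2) := by
  have hNR : (N : ℝ) ≠ 0 := Nat.cast_ne_zero.mpr hN.ne'
  have hσ0 : σ ≠ 0 := hσ.ne'
  unfold pdensity
  rw [mul_assoc (σ⁻¹ * (2 * π) ^ (-(N : ℝ) / 2))]
  congr 1
  simp_rw [← Real.exp_sum, ← Real.exp_add]
  congr 1
  have e1 : ∑ k : Fin N, ∑ l ∈ Finset.univ.filter (fun l => k < l),
      (-(1 / (2 * (N : ℝ))) * (1 - (σ ^ 2)⁻¹) * (x k - x l) ^ 2)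
      = -(1 / (2 * (N : ℝ))) * (1 - (σ ^ 2)⁻¹) *
        ((N : ℝ) * ∑ n, (x n) ^ 2 - (∑ n, x n) ^ 2) := by
    simp_rw [← Finset.mul_sum]
    rw [sum_pairs_sq]
  have e2 : ∑ n : Fin N, (-(x n) ^ 2 / (2 * σ ^ 2))
      = -(∑ n, (x n) ^ 2) / (2 * σ ^ 2) := by
    rw [← Finset.sum_div, ← Finset.sum_neg_distrib]
  have e3 : ∑ n : Fin N, (-(1/2) * (x n + (σ⁻¹ - 1) / N * ∑ m, x m) ^ 2)
      = -(1/2) * (∑ n, (x n) ^ 2) - ((σ⁻¹ - 1) / N) * (∑ n, x n) ^ 2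
        - (N : ℝ) * (1/2) * ((σ⁻¹ - 1) / N * ∑ m, x m) ^ 2 := by
    have : ∀ n : Fin N, -(1/2) * (x n + (σ⁻¹ - 1) / N * ∑ m, x m) ^ 2
        = -(1/2) * (x n) ^ 2 - ((σ⁻¹ - 1) / N * ∑ m, x m) * x n
          - (1/2) * ((σ⁻¹ - 1) / N * ∑ m, x m) ^ 2 := by
      intro n; ring
    simp_rw [this, Finset.sum_sub_distrib, ← Finset.mul_sum, Finset.sum_const,
      Finset.card_univ, Fintype.card_fin, nsmul_eq_mul]
    ring
  rw [e1, e2, e3]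
  set Q := ∑ n, (x n) ^ 2
  set S := ∑ n, x n
  field_simp
  ring

private lemma gauss_integral_aux (N : ℕ) (hN : 2 ≤ N) (σ : ℝ) (hσ : 0 < σ) (c : ℝ)
    (hc : c = (σ⁻¹ - 1) / N) :
    ∫ x : Fin N → ℝ, ∏ n : Fin N, Real.exp (-(1/2) * (x n + c * ∑ m, x m) ^ 2)
      = σ * Real.sqrt (2 * π) ^ N := by
  have hNR : (N : ℝ) ≠ 0 := Nat.cast_ne_zero.mpr (by omega)
  have hσ0 : σ ≠ 0 := hσ.ne'
  set M : Matrix (Fin N) (Fin N) ℝ :=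
    (1 : Matrix (Fin N) (Fin N) ℝ)
      + Matrix.replicateCol (Fin 1) (fun _ => c) * Matrix.replicateRow (Fin 1) (fun _ => (1:ℝ)) with hM
  have hdetM : M.det = σ⁻¹ := by
    erw [hM, Matrix.det_one_add_replicateCol_mul_replicateRow (ι := Fin 1) (fun _ => c) (fun _ => (1:ℝ))]
    simp [dotProduct, hc]
    field_simp
    ring
  set T := Matrix.toLin' M with hT
  have hdetT : LinearMap.det T = σ⁻¹ := by
    rw [hT, LinearMap.det_toLin', hdetM]
  have hdet0 : LinearMap.det T ≠ 0 := by rw [hdetT]; exact inv_ne_zero hσ0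
  have hTapp : ∀ (x : Fin N → ℝ) (n : Fin N), T x n = x n + c * ∑ m, x m := by
    intro x n
    rw [hT, Matrix.toLin'_apply, Matrix.mulVec, dotProduct]
    have hMa : ∀ m, M n m = (if n = m then (1:ℝ) else 0) + c := by
      intro m; simp [hM, Matrix.one_apply, Matrix.mul_apply]
    simp_rw [hMa, add_mul, Finset.sum_add_distrib, ite_mul, one_mul, zero_mul,
      Finset.sum_ite_eq, Finset.mem_univ, if_true, Finset.mul_sum]
  have hg : Continuous fun y : Fin N → ℝ => ∏ n, Real.exp (-(1/2) * (y n) ^ 2) := by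
    fun_prop
  have hTc : Continuous T := T.continuous_of_finiteDimensional
  have hmap : Measure.map T (volume : Measure (Fin N → ℝ))
      = ENNReal.ofReal |(LinearMap.det T)⁻¹| • volume :=
    Measure.map_linearMap_addHaar_eq_smul_addHaar _ hdet0
  have step : ∫ x : Fin N → ℝ, ∏ n : Fin N, Real.exp (-(1/2) * (x n + c * ∑ m, x m) ^ 2)
      = ∫ x : Fin N → ℝ, ∏ n : Fin N, Real.exp (-(1/2) * (T x n) ^ 2) := by
    refine integral_congr_ae (Filter.Eventually.of_forall fun x => ?_)
    simp_rw [hTapp]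
  rw [step]
  have step2 : ∫ x : Fin N → ℝ, ∏ n : Fin N, Real.exp (-(1/2) * (T x n) ^ 2)
      = σ * ∫ y : Fin N → ℝ, ∏ n : Fin N, Real.exp (-(1/2) * (y n) ^ 2) := by
    rw [← MeasureTheory.integral_map hTc.aemeasurable (hg.aestronglyMeasurable), hmap,
      integral_smul_measure, hdetT]
    rw [inv_inv, abs_of_pos hσ]
    simp [ENNReal.toReal_ofReal hσ.le]
  rw [step2]
  congr 1
  rw [integral_fintype_prod_volume_eq_pow (ι := Fin N) (f := fun t : ℝ => Real.exp (-(1/2) * t ^ 2))]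
  simp only [Fintype.card_fin]
  congr 1
  have h := integral_gaussian (1/2)
  rw [h, show π / (1/2:ℝ) = 2 * π by ring]

/-- For every integer `N ≥ 2` and every `σ > 0`, the density `p_{N,σ}` integrates to `1`
over `ℝ^N`, i.e. it is a probability density. -/
theorem pdensity_integral_eq_one (N : ℕ) (hN : 2 ≤ N) (σ : ℝ) (hσ : 0 < σ) :
    ∫ x : Fin N → ℝ, pdensity N σ x = 1 := by
  have hσ0 : σ ≠ 0 := hσ.ne'
  have h2π : (0:ℝ) < 2 * π := by positivity
  calc ∫ x : Fin N → ℝ, pdensity N σ x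
      = ∫ x : Fin N → ℝ, σ⁻¹ * (2 * π) ^ (-(N : ℝ) / 2) *
          ∏ n : Fin N, Real.exp (-(1/2) * (x n + (σ⁻¹ - 1) / N * ∑ m, x m) ^ 2) :=
        integral_congr_ae (Filter.Eventually.of_forall fun x =>
          pdensity_eq N (by omega) σ hσ x)
    _ = σ⁻¹ * (2 * π) ^ (-(N : ℝ) / 2) *
          ∫ x : Fin N → ℝ, ∏ n : Fin N,
            Real.exp (-(1/2) * (x n + (σ⁻¹ - 1) / N * ∑ m, x m) ^ 2) :=
        integral_const_mul _ _
    _ = σ⁻¹ * (2 * π) ^ (-(N : ℝ) / 2) * (σ * Real.sqrt (2 * π) ^ N) := by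
        rw [gauss_integral_aux N hN σ hσ _ rfl]
    _ = 1 := by
        rw [Real.sqrt_eq_rpow, ← Real.rpow_natCast ((2*π) ^ (1/2:ℝ)) N,
          ← Real.rpow_mul h2π.le, show (1/2:ℝ) * (N:ℝ) = (N:ℝ)/2 by ring]
        rw [show σ⁻¹ * (2*π) ^ (-(N:ℝ)/2) * (σ * (2*π) ^ ((N:ℝ)/2))
            = (σ⁻¹ * σ) * ((2*π) ^ (-(N:ℝ)/2) * (2*π) ^ ((N:ℝ)/2)) by ring,
          inv_mul_cancel₀ hσ0, ← Real.rpow_add h2π, show -(N:ℝ)/2 + (N:ℝ)/2 = 0 by ring]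
        norm_num
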